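/- Let b, g ∈ ℂ[T] and N ≥ 1, and suppose θ₀ is an element of an associative ℂ-algebra commuting with an element η, with b(η + θ₀) = b(η) + g-term divisible by θ₀, i.e. b(η+θ₀) − b(η) ∈ θ₀·ℂ[η,θ₀]. Then there exist c, h ∈ ℂ[η, θ₀] such that b(η+θ₀)·b(η+θ₀−1)⋯b(η+θ₀−N+1) = c·b(η) + h·θ₀(θ₀−1)⋯(θ₀−N+1). -/
import Mathlib

open Polynomial

theorem aux17 {R : Type*} [CommRing R] (f : ℂ →+* R) (x y : R) (b : ℂ[X]) (N : ℕ) :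
    ∃ c h : R,
      ((List.range N).map fun (k : ℕ) => eval₂ f (x + y - (k : R)) b).prod
        = c * eval₂ f x b + h * ((List.range N).map fun (k : ℕ) => y - (k : R)).prod := by
  induction N with
  | zero => exact ⟨0, 1, by simp⟩
  | succ n ih =>
    obtain ⟨c, h, ih⟩ := ih
    obtain ⟨g, hg⟩ : (y - (n : R)) ∣ eval₂ f (x + y - (n : R)) b - eval₂ f x b := by
      have h1 := Polynomial.sub_dvd_eval_sub (x + y - (n : R)) x (b.map f)
      have h2 : x + y - (n : R) - x = y - (n : R) := by ring
      rw [h2] at h1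
      simpa [Polynomial.eval_map] using h1
    refine ⟨c * eval₂ f (x + y - (n : R)) b
        + h * ((List.range n).map fun (k : ℕ) => y - (k : R)).prod, h * g, ?_⟩
    rw [List.range_succ]
    simp only [List.map_append, List.prod_append, List.map_cons, List.map_nil,
      List.prod_cons, List.prod_nil, mul_one]
    rw [ih]
    set B := eval₂ f x b
    set E := eval₂ f (x + y - (n : R)) b
    set Q := ((List.range n).map fun (k : ℕ) => y - (k : R)).prod
    linear_combination (h * Q) * hg

theorem stmt17 {A : Type*} [Ring A] [Algebra ℂ A] (η θ₀ : A)
    (hcomm : η * θ₀ = θ₀ * η) (b : Polynomial ℂ) (N : ℕ) (hN : 1 ≤ N)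
    (hb : ∃ g ∈ Algebra.adjoin ℂ ({η, θ₀} : Set A),
      Polynomial.aeval (η + θ₀) b - Polynomial.aeval η b = θ₀ * g) :
    ∃ c ∈ Algebra.adjoin ℂ ({η, θ₀} : Set A),
      ∃ h ∈ Algebra.adjoin ℂ ({η, θ₀} : Set A),
        ((List.range N).map fun (k : ℕ) => Polynomial.aeval (η + θ₀ - (k : A)) b).prod
          = c * Polynomial.aeval η b
            + h * ((List.range N).map fun (k : ℕ) => θ₀ - (k : A)).prod := by
  set S := Algebra.adjoin ℂ ({η, θ₀} : Set A) with hS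
  have hη : η ∈ S := Algebra.subset_adjoin (by simp)
  have hθ : θ₀ ∈ S := Algebra.subset_adjoin (by simp)
  letI : CommRing S := Algebra.adjoinCommRingOfComm ℂ (by
    rintro a (rfl | rfl) b (rfl | rfl) <;> first | rfl | exact hcomm | exact hcomm.symm)
  obtain ⟨c, h, key⟩ := aux17 (algebraMap ℂ S) (⟨η, hη⟩ : S) (⟨θ₀, hθ⟩ : S) b N
  refine ⟨c, c.2, h, h.2, ?_⟩
  set V : S →+* A := S.val.toRingHom with hV
  have key2 := congrArg V key
  rw [map_add, map_mul, map_mul, map_list_prod, map_list_prod, List.map_map, List.map_map]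
    at key2
  have hval : ∀ z : S, V (eval₂ (algebraMap ℂ S) z b) = Polynomial.aeval ((z : A)) b := by
    intro z
    rw [Polynomial.hom_eval₂, Polynomial.aeval_def]
    congr 1
  have hc1 : (⇑V ∘ fun (k : ℕ) => eval₂ (algebraMap ℂ S) (⟨η, hη⟩ + ⟨θ₀, hθ⟩ - (k : S)) b)
      = fun (k : ℕ) => Polynomial.aeval (η + θ₀ - (k : A)) b := by
    funext k
    simp only [Function.comp_apply, hval]
    congr 1
  have hc2 : (⇑V ∘ fun (k : ℕ) => (⟨θ₀, hθ⟩ : S) - (k : S)) = fun (k : ℕ) => θ₀ - (k : A) := by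
    funext k
    show ((⟨θ₀, hθ⟩ - (k : S) : S) : A) = θ₀ - (k : A)
    push_cast
    rfl
  rw [hc1, hc2, hval] at key2
  exact key2
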